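/- Let D = 3 and suppose the design matrix Z ∈ ℝ^{n×p₁p₂p₃} has orthonormal columns (ZᵀZ = I) and y = Z vec(G_b), where G_b = v₁ ∘ w₂ ∘ w₃ + w₁ ∘ v₂ ∘ w₃ + w₁ ∘ w₂ ∘ v₃ with w_d, v_d ∈ ℝ^{p_d} a linearly independent pair for each d = 1,2,3. Then for every α > 0, the coefficient-penalized rank-constrained problem inf{‖y − Z vec(A)‖² + α‖A‖_F² : rank(A) ≤ 2} does not attain its infimum (it has no solution). In particular, imposing the ridge penalty on the coefficient tensor does not guarantee existence of a solution. -/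

import Mathlib

open scoped BigOperators
open Matrix

noncomputable section

/-- Outer product of three vectors, as an order-3 tensor. -/
def outer3 {p₁ p₂ p₃ : ℕ} (u : Fin p₁ → ℝ) (v : Fin p₂ → ℝ) (w : Fin p₃ → ℝ) :
    Fin p₁ × Fin p₂ × Fin p₃ → ℝ :=
  fun i => u i.1 * v i.2.1 * w i.2.2

/-- CP rank of an order-3 tensor: the least `R` such that the tensor is a sum of `R`
outer products. -/
def rank3 {p₁ p₂ p₃ : ℕ} (A : Fin p₁ × Fin p₂ × Fin p₃ → ℝ) : ℕ :=
  sInf {R : ℕ | ∃ (a : Fin R → Fin p₁ → ℝ) (b : Fin R → Fin p₂ → ℝ) (c : Fin R → Fin p₃ → ℝ),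
    A = fun i => ∑ r, a r i.1 * b r i.2.1 * c r i.2.2}

lemma exists_det {p : ℕ} {x y : Fin p → ℝ} (h : LinearIndependent ℝ ![x, y]) :
    ∃ k₀ k₁, x k₀ * y k₁ - x k₁ * y k₀ ≠ 0 := by
  rw [linearIndependent_fin2] at h
  by_contra hc
  push_neg at hc
  obtain ⟨k, hk⟩ := Function.ne_iff.mp h.1
  apply h.2 (x k / y k)
  funext j
  have h1 := hc k j
  have hk' : y k ≠ 0 := by simpa using hk
  show x k / y k * y j = x j
  field_simp
  linarith [h1]

lemma li_smul {p : ℕ} {w v : Fin p → ℝ} (h : LinearIndependent ℝ ![w, v]) {c : ℝ} (hc : c ≠ 0) :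
    LinearIndependent ℝ ![w, fun i => c * v i] := by
  rw [linearIndependent_fin2] at h ⊢
  constructor
  · intro h0
    apply h.1
    funext i
    have := congrFun h0 i
    simp at this
    rcases this with h' | h'
    · exact absurd h' hc
    · simpa using h'
  · intro a ha
    apply h.2 (a * c)
    funext i
    have := congrFun ha i
    simp [mul_assoc] at this ⊢
    linarith [this]

lemma rank1_contra {p₂ p₃ : ℕ} (v₂ w₂ b : Fin p₂ → ℝ) (w₃ u c : Fin p₃ → ℝ) (d : ℝ)
    (hd : d ≠ 0) (hv2 : v₂ ≠ 0) (hpair : ∀ a : ℝ, a • v₂ ≠ w₂)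
    (k₀ k₁ : Fin p₃) (he : w₃ k₀ * u k₁ - w₃ k₁ * u k₀ ≠ 0)
    (H : ∀ j k, d * (v₂ j * w₃ k + w₂ j * u k) = b j * c k) : False := by
  set e := w₃ k₀ * u k₁ - w₃ k₁ * u k₀ with he'
  set s := u k₁ * c k₀ - u k₀ * c k₁ with hs'
  set s' := w₃ k₀ * c k₁ - w₃ k₁ * c k₀ with hs''
  have hde : d * e ≠ 0 := mul_ne_zero hd he
  have hv : ∀ j, d * e * v₂ j = b j * s := fun j => by
    rw [he', hs']; linear_combination u k₁ * H j k₀ - u k₀ * H j k₁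
  have hw : ∀ j, d * e * w₂ j = b j * s' := fun j => by
    rw [he', hs'']; linear_combination w₃ k₀ * H j k₁ - w₃ k₁ * H j k₀
  have hs : s ≠ 0 := by
    intro h0
    apply hv2
    funext j
    have := hv j
    rw [h0, mul_zero] at this
    simpa using (mul_eq_zero.mp this).resolve_left hde
  apply hpair (s' / s)
  funext j
  have hws : w₂ j * s = v₂ j * s' := by
    apply mul_left_cancel₀ hde
    linear_combination s * hw j - s' * hv j
  show s' / s * v₂ j = w₂ j
  field_simp
  linarith [hws]

lemma key2 {p₁ p₂ p₃ : ℕ} (w₁ v₁ : Fin p₁ → ℝ) (w₂ v₂ : Fin p₂ → ℝ) (w₃ v₃ : Fin p₃ → ℝ)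
    (h₁ : LinearIndependent ℝ ![w₁, v₁])
    (h₂ : LinearIndependent ℝ ![w₂, v₂])
    (h₃ : LinearIndependent ℝ ![w₃, v₃])
    (a0 a1 : Fin p₁ → ℝ) (b0 b1 : Fin p₂ → ℝ) (c0 c1 : Fin p₃ → ℝ)
    (H : ∀ i j k, v₁ i * w₂ j * w₃ k + w₁ i * v₂ j * w₃ k + w₁ i * w₂ j * v₃ k
      = a0 i * b0 j * c0 k + a1 i * b1 j * c1 k) : False := by
  obtain ⟨k₀, k₁, hd⟩ := exists_det h₁
  set d := w₁ k₀ * v₁ k₁ - w₁ k₁ * v₁ k₀ with hdd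
  set lam0 := v₁ k₁ * a0 k₀ - v₁ k₀ * a0 k₁ with hl0
  set lam1 := v₁ k₁ * a1 k₀ - v₁ k₀ * a1 k₁ with hl1
  set mu0 := w₁ k₀ * a0 k₁ - w₁ k₁ * a0 k₀ with hm0
  set mu1 := w₁ k₀ * a1 k₁ - w₁ k₁ * a1 k₀ with hm1
  have hM : ∀ j k, d * (v₂ j * w₃ k + w₂ j * v₃ k)
      = lam0 * (b0 j * c0 k) + lam1 * (b1 j * c1 k) := fun j k => by
    rw [hdd, hl0, hl1]; linear_combination v₁ k₁ * H k₀ j k - v₁ k₀ * H k₁ j k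
  have hN : ∀ j k, d * (w₂ j * w₃ k)
      = mu0 * (b0 j * c0 k) + mu1 * (b1 j * c1 k) := fun j k => by
    rw [hdd, hm0, hm1]; linear_combination w₁ k₀ * H k₁ j k - w₁ k₁ * H k₀ j k
  obtain ⟨m₀, m₁, he⟩ := exists_det h₃
  have h2' := linearIndependent_fin2.mp h₂
  by_cases hmu1 : mu1 = 0
  · by_cases hmu0 : mu0 = 0
    · -- then w₂ ∘ w₃ = 0
      have hw2 : w₂ ≠ 0 := by have := h₂.ne_zero 0; simpa using this
      have hw3 : w₃ ≠ 0 := by have := h₃.ne_zero 0; simpa using this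
      obtain ⟨j, hj⟩ := Function.ne_iff.mp hw2
      obtain ⟨k, hk⟩ := Function.ne_iff.mp hw3
      have := hN j k
      rw [hmu0, hmu1] at this
      simp at this
      rcases this with h' | h' | h'
      · exact hd h'
      · exact hj (by simpa using h')
      · exact hk (by simpa using h')
    · -- eliminate term 0 with t = -lam0/mu0, remaining term 1
      set t := -(lam0 / mu0) with ht
      have h0 : lam0 + t * mu0 = 0 := by rw [ht]; field_simp; ring
      refine rank1_contra v₂ w₂ (fun j => (lam1 + t * mu1) * b1 j) w₃
        (fun k => v₃ k + t * w₃ k) c1 d hd h2'.1 h2'.2 m₀ m₁ ?_ ?_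
      · show w₃ m₀ * (v₃ m₁ + t * w₃ m₁) - w₃ m₁ * (v₃ m₀ + t * w₃ m₀) ≠ 0
        have : w₃ m₀ * (v₃ m₁ + t * w₃ m₁) - w₃ m₁ * (v₃ m₀ + t * w₃ m₀)
            = w₃ m₀ * v₃ m₁ - w₃ m₁ * v₃ m₀ := by ring
        rwa [this]
      · intro j k
        show d * (v₂ j * w₃ k + w₂ j * (v₃ k + t * w₃ k)) = (lam1 + t * mu1) * b1 j * c1 k
        linear_combination hM j k + t * hN j k + (b0 j * c0 k) * h0
  · -- eliminate term 1 with t = -lam1/mu1, remaining term 0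
    set t := -(lam1 / mu1) with ht
    have h0 : lam1 + t * mu1 = 0 := by rw [ht]; field_simp; ring
    refine rank1_contra v₂ w₂ (fun j => (lam0 + t * mu0) * b0 j) w₃
      (fun k => v₃ k + t * w₃ k) c0 d hd h2'.1 h2'.2 m₀ m₁ ?_ ?_
    · show w₃ m₀ * (v₃ m₁ + t * w₃ m₁) - w₃ m₁ * (v₃ m₀ + t * w₃ m₀) ≠ 0
      have : w₃ m₀ * (v₃ m₁ + t * w₃ m₁) - w₃ m₁ * (v₃ m₀ + t * w₃ m₀)
          = w₃ m₀ * v₃ m₁ - w₃ m₁ * v₃ m₀ := by ring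
      rwa [this]
    · intro j k
      show d * (v₂ j * w₃ k + w₂ j * (v₃ k + t * w₃ k)) = (lam0 + t * mu0) * b0 j * c0 k
      linear_combination hM j k + t * hN j k + (b1 j * c1 k) * h0

lemma rank_set_nonempty {p₁ p₂ p₃ : ℕ} (A : Fin p₁ × Fin p₂ × Fin p₃ → ℝ) :
    {R : ℕ | ∃ (a : Fin R → Fin p₁ → ℝ) (b : Fin R → Fin p₂ → ℝ) (c : Fin R → Fin p₃ → ℝ),
      A = fun i => ∑ r, a r i.1 * b r i.2.1 * c r i.2.2}.Nonempty := by
  classical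
  refine ⟨Fintype.card (Fin p₁ × Fin p₂ × Fin p₃), ?_⟩
  set e := (Fintype.equivFin (Fin p₁ × Fin p₂ × Fin p₃)).symm with he
  refine ⟨fun r i => if i = (e r).1 then A (e r) else 0,
          fun r j => if j = (e r).2.1 then 1 else 0,
          fun r k => if k = (e r).2.2 then 1 else 0, ?_⟩
  funext i
  have hsum : ∑ t : Fin p₁ × Fin p₂ × Fin p₃,
      ((if i.1 = t.1 then A t else 0) * (if i.2.1 = t.2.1 then (1:ℝ) else 0)
        * (if i.2.2 = t.2.2 then (1:ℝ) else 0)) = A i := by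
    rw [Finset.sum_eq_single i]
    · simp
    · intro t _ hti
      by_cases h1 : i.1 = t.1 <;> by_cases h2 : i.2.1 = t.2.1 <;> by_cases h3 : i.2.2 = t.2.2 <;>
        simp [h1, h2, h3]
      exact absurd (Prod.ext h1 (Prod.ext h2 h3)).symm hti
    · intro h; exact absurd (Finset.mem_univ i) h
  exact ((Fintype.sum_equiv e _ _ fun r => rfl).trans hsum).symm

lemma rep_two {p₁ p₂ p₃ : ℕ} (A : Fin p₁ × Fin p₂ × Fin p₃ → ℝ) (h : rank3 A ≤ 2) :
    ∃ (a0 a1 : Fin p₁ → ℝ) (b0 b1 : Fin p₂ → ℝ) (c0 c1 : Fin p₃ → ℝ),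
      ∀ i j k, A (i, j, k) = a0 i * b0 j * c0 k + a1 i * b1 j * c1 k := by
  have hmem := Nat.sInf_mem (rank_set_nonempty A)
  obtain ⟨R, hR2, a, b, c, hA⟩ : ∃ R ≤ 2, ∃ (a : Fin R → Fin p₁ → ℝ) (b : Fin R → Fin p₂ → ℝ)
      (c : Fin R → Fin p₃ → ℝ), A = fun i => ∑ r, a r i.1 * b r i.2.1 * c r i.2.2 :=
    ⟨rank3 A, h, hmem⟩
  interval_cases R
  · exact ⟨0, 0, 0, 0, 0, 0, fun i j k => by rw [hA]; simp⟩
  · exact ⟨a 0, 0, b 0, 0, c 0, 0, fun i j k => by rw [hA]; simp⟩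
  · exact ⟨a 0, a 1, b 0, b 1, c 0, c 1, fun i j k => by rw [hA]; simp [Fin.sum_univ_two]⟩


/-- with an orthonormal-column design (`ZᵀZ = I`) and responses
`y = Z vec(G_b)` for the degenerate tensor `G_b = v₁∘w₂∘w₃ + w₁∘v₂∘w₃ + w₁∘w₂∘v₃`,
for every `α > 0` the ridge-penalized (on the coefficient tensor) rank-2-constrained
problem `inf{‖y − Z vec(A)‖² + α‖A‖_F² : rank(A) ≤ 2}` has no solution. -/
theorem stmt12 {n p₁ p₂ p₃ : ℕ}
    (Z : Matrix (Fin n) (Fin p₁ × Fin p₂ × Fin p₃) ℝ)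
    (hZ : Zᵀ * Z = 1)
    (w₁ v₁ : Fin p₁ → ℝ) (w₂ v₂ : Fin p₂ → ℝ) (w₃ v₃ : Fin p₃ → ℝ)
    (h₁ : LinearIndependent ℝ ![w₁, v₁])
    (h₂ : LinearIndependent ℝ ![w₂, v₂])
    (h₃ : LinearIndependent ℝ ![w₃, v₃])
    (y : Fin n → ℝ)
    (hy : y = Z.mulVec (outer3 v₁ w₂ w₃ + outer3 w₁ v₂ w₃ + outer3 w₁ w₂ v₃)) :
    ∀ α : ℝ, 0 < α →
      ¬ ∃ A : Fin p₁ × Fin p₂ × Fin p₃ → ℝ, rank3 A ≤ 2 ∧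
        ∀ B : Fin p₁ × Fin p₂ × Fin p₃ → ℝ, rank3 B ≤ 2 →
          (∑ i, (y i - Z.mulVec A i) ^ 2) + α * ∑ j, A j ^ 2 ≤
            (∑ i, (y i - Z.mulVec B i) ^ 2) + α * ∑ j, B j ^ 2 := by
  intro α hα
  rintro ⟨A, hrank, hmin⟩
  set G : Fin p₁ × Fin p₂ × Fin p₃ → ℝ :=
    outer3 v₁ w₂ w₃ + outer3 w₁ v₂ w₃ + outer3 w₁ w₂ v₃ with hGdef
  have hc : (0:ℝ) < 1 + α := by linarith
  set cst : ℝ := 1 / (1 + α) with hcst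
  -- norm preservation
  have hZ' : ∀ x : Fin p₁ × Fin p₂ × Fin p₃ → ℝ,
      ∑ i, (Z.mulVec x i) ^ 2 = ∑ j, (x j) ^ 2 := by
    intro x
    have h1 : Z.mulVec x ⬝ᵥ Z.mulVec x = x ⬝ᵥ x := by
      rw [dotProduct_mulVec, ← Matrix.mulVec_transpose, Matrix.mulVec_mulVec, hZ,
        Matrix.one_mulVec]
    simpa [dotProduct, sq] using h1
  have hobj : ∀ B : Fin p₁ × Fin p₂ × Fin p₃ → ℝ,
      (∑ i, (y i - Z.mulVec B i) ^ 2) = ∑ j, (G j - B j) ^ 2 := by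
    intro B
    have hyB : ∀ i, y i - Z.mulVec B i = Z.mulVec (G - B) i := by
      intro i
      rw [Matrix.mulVec_sub, hy]
      simp [hGdef]
    calc (∑ i, (y i - Z.mulVec B i) ^ 2) = ∑ i, (Z.mulVec (G - B) i) ^ 2 := by
          exact Finset.sum_congr rfl fun i _ => by rw [hyB i]
      _ = ∑ j, ((G - B) j) ^ 2 := hZ' _
      _ = ∑ j, (G j - B j) ^ 2 := by simp
  have hkey : ∀ B : Fin p₁ × Fin p₂ × Fin p₃ → ℝ,
      (∑ i, (y i - Z.mulVec B i) ^ 2) + α * ∑ j, B j ^ 2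
        = (1 + α) * (∑ j, (B j - cst * G j) ^ 2) + (α / (1 + α)) * ∑ j, (G j) ^ 2 := by
    intro B
    rw [hobj, Finset.mul_sum, Finset.mul_sum, Finset.mul_sum, ← Finset.sum_add_distrib,
      ← Finset.sum_add_distrib]
    refine Finset.sum_congr rfl fun j _ => ?_
    rw [hcst]
    field_simp
    ring
  have hcomp : ∀ B : Fin p₁ × Fin p₂ × Fin p₃ → ℝ, rank3 B ≤ 2 →
      ∑ j, (A j - cst * G j) ^ 2 ≤ ∑ j, (B j - cst * G j) ^ 2 := by
    intro B hB
    have h := hmin B hB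
    rw [hkey A, hkey B] at h
    have h' : (1 + α) * (∑ j, (A j - cst * G j) ^ 2)
        ≤ (1 + α) * (∑ j, (B j - cst * G j) ^ 2) := by linarith
    exact le_of_mul_le_mul_left h' hc
  -- the approximating family
  set E2 : Fin p₁ × Fin p₂ × Fin p₃ → ℝ := fun j =>
    v₁ j.1 * v₂ j.2.1 * w₃ j.2.2 + v₁ j.1 * w₂ j.2.1 * v₃ j.2.2 + w₁ j.1 * v₂ j.2.1 * v₃ j.2.2
    with hE2
  set E3 : Fin p₁ × Fin p₂ × Fin p₃ → ℝ := fun j => v₁ j.1 * v₂ j.2.1 * v₃ j.2.2 with hE3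
  set CB : ℝ := ∑ j, (|E2 j| + |E3 j|) ^ 2 with hCB'
  have hCB : 0 ≤ CB := Finset.sum_nonneg fun j _ => sq_nonneg _
  have hfam : ∀ t : ℝ, 0 < t → t ≤ 1 →
      ∑ j, (A j - cst * G j) ^ 2 ≤ cst ^ 2 * t ^ 2 * CB := by
    intro t ht0 ht1
    have htne : t ≠ 0 := ne_of_gt ht0
    set Bt : Fin p₁ × Fin p₂ × Fin p₃ → ℝ := fun i =>
      (cst / t) * ((w₁ i.1 + t * v₁ i.1) * (w₂ i.2.1 + t * v₂ i.2.1) * (w₃ i.2.2 + t * v₃ i.2.2)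
        - w₁ i.1 * w₂ i.2.1 * w₃ i.2.2) with hBt
    have hBtr : rank3 Bt ≤ 2 := by
      apply Nat.sInf_le
      refine ⟨![fun i => (cst / t) * (w₁ i + t * v₁ i), fun i => -((cst / t) * w₁ i)],
        ![fun j => w₂ j + t * v₂ j, w₂], ![fun k => w₃ k + t * v₃ k, w₃], ?_⟩
      funext i
      rw [hBt]
      simp [Fin.sum_univ_two]
      ring
    refine (hcomp Bt hBtr).trans ?_
    rw [hCB', Finset.mul_sum]
    refine Finset.sum_le_sum fun j _ => ?_
    have hident : Bt j - cst * G j = cst * t * (E2 j + t * E3 j) := by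
      simp only [hBt, hGdef, hE2, hE3, Pi.add_apply, outer3]
      field_simp
      ring
    rw [hident]
    have h2 : (E2 j + t * E3 j) ^ 2 ≤ (|E2 j| + |E3 j|) ^ 2 := by
      refine sq_le_sq' ?_ ?_
      · nlinarith [mul_nonneg ht0.le (by linarith [neg_abs_le (E3 j)] : (0:ℝ) ≤ E3 j + |E3 j|),
          mul_nonneg (sub_nonneg.mpr ht1) (abs_nonneg (E3 j)), neg_abs_le (E2 j)]
      · nlinarith [mul_nonneg ht0.le (by linarith [le_abs_self (E3 j)] : (0:ℝ) ≤ |E3 j| - E3 j),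
          mul_nonneg (sub_nonneg.mpr ht1) (abs_nonneg (E3 j)), le_abs_self (E2 j)]
    calc (cst * t * (E2 j + t * E3 j)) ^ 2 = cst ^ 2 * t ^ 2 * (E2 j + t * E3 j) ^ 2 := by ring
      _ ≤ cst ^ 2 * t ^ 2 * (|E2 j| + |E3 j|) ^ 2 := by
          refine mul_le_mul_of_nonneg_left h2 (by positivity)
  -- conclude A = cst • G
  set SA : ℝ := ∑ j, (A j - cst * G j) ^ 2 with hSA'
  have hSA0 : SA = 0 := by
    by_contra hne
    have hpos : 0 < SA := lt_of_le_of_ne (Finset.sum_nonneg fun j _ => sq_nonneg _) (Ne.symm hne)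
    set Q : ℝ := cst ^ 2 * CB + 1 with hQ'
    have hQpos : 0 < Q := by nlinarith [hCB, sq_nonneg cst]
    have hargpos : 0 < SA / (2 * Q) := by positivity
    set t : ℝ := min 1 (Real.sqrt (SA / (2 * Q))) with ht'
    have ht0 : 0 < t := lt_min one_pos (Real.sqrt_pos.mpr hargpos)
    have ht1 : t ≤ 1 := min_le_left _ _
    have h1 := hfam t ht0 ht1
    have ht2 : t ^ 2 ≤ SA / (2 * Q) := by
      have hts : t ≤ Real.sqrt (SA / (2 * Q)) := min_le_right _ _
      have hpw := pow_le_pow_left₀ ht0.le hts 2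
      rwa [Real.sq_sqrt hargpos.le] at hpw
    have h3 : cst ^ 2 * t ^ 2 * CB ≤ Q * t ^ 2 := by nlinarith [sq_nonneg t, hCB]
    have h4 : Q * t ^ 2 ≤ Q * (SA / (2 * Q)) := mul_le_mul_of_nonneg_left ht2 hQpos.le
    have h5 : Q * (SA / (2 * Q)) = SA / 2 := by field_simp
    clear_value SA Q t
    linarith
  have hA_eq : A = fun j => cst * G j := by
    funext j
    have hle : (A j - cst * G j) ^ 2 ≤ SA := by
      rw [hSA']
      exact Finset.single_le_sum (f := fun i => (A i - cst * G i) ^ 2)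
        (fun i _ => sq_nonneg _) (Finset.mem_univ j)
    have h0 : (A j - cst * G j) ^ 2 = 0 := le_antisymm (hSA0 ▸ hle) (sq_nonneg _)
    have h0' : A j - cst * G j = 0 := by
      have := sq_eq_zero_iff.mp h0
      exact this
    linarith [h0']
  -- final contradiction via the rank lower bound
  have hrank' : rank3 (fun j => cst * G j) ≤ 2 := hA_eq ▸ hrank
  obtain ⟨a0, a1, b0, b1, c0, c1, hrep⟩ := rep_two _ hrank'
  have hcne : cst ≠ 0 := by positivity
  refine key2 w₁ (fun i => cst * v₁ i) w₂ (fun j => cst * v₂ j) w₃ (fun k => cst * v₃ k)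
    (li_smul h₁ hcne) (li_smul h₂ hcne) (li_smul h₃ hcne) a0 a1 b0 b1 c0 c1 ?_
  intro i j k
  have h := hrep i j k
  simp only [hGdef, Pi.add_apply, outer3] at h
  linear_combination h
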